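/- Let p, q ∈ Δ^m with q = Bp for a doubly-stochastic matrix B. If there exists a row i* and indices j₁ ≠ j₂ with B_{i*j₁} > 0, B_{i*j₂} > 0, and p_{j₁} ≠ p_{j₂}, then H(q) > H(p) strictly. -/
import Mathlib

noncomputable def entropy {m : ℕ} (u : Fin m → ℝ) : ℝ :=
  -∑ i, u i * Real.log (u i)

theorem entropy_doublyStochastic_lt {m : ℕ} (p q : Fin m → ℝ)
    (B : Matrix (Fin m) (Fin m) ℝ)
    (hp0 : ∀ i, 0 ≤ p i) (hp1 : ∑ i, p i = 1)
    (hq0 : ∀ i, 0 ≤ q i) (hq1 : ∑ i, q i = 1)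
    (hB0 : ∀ i j, 0 ≤ B i j)
    (hBrow : ∀ i, ∑ j, B i j = 1)
    (hBcol : ∀ j, ∑ i, B i j = 1)
    (hq : ∀ i, q i = ∑ j, B i j * p j)
    (istar : Fin m) (j₁ j₂ : Fin m) (hj : j₁ ≠ j₂)
    (h1 : 0 < B istar j₁) (h2 : 0 < B istar j₂)
    (hpj : p j₁ ≠ p j₂) :
    entropy p < entropy q := by
  classical
  set f : ℝ → ℝ := fun x => x * Real.log x with hf
  have hcvx : StrictConvexOn ℝ (Set.Ici (0:ℝ)) f := Real.strictConvexOn_mul_log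
  -- non-strict Jensen for each row
  have hle : ∀ i, f (q i) ≤ ∑ j, B i j * f (p j) := by
    intro i
    rw [hq i]
    simpa [smul_eq_mul] using
      hcvx.convexOn.map_sum_le (t := Finset.univ) (w := fun j => B i j) (p := p)
        (fun j _ => hB0 i j) (hBrow i) (fun j _ => hp0 j)
  -- strict Jensen at istar
  have hlt : f (q istar) < ∑ j, B istar j * f (p j) := by
    set t : Finset (Fin m) := Finset.univ.filter (fun j => 0 < B istar j) with ht
    have hzero : ∀ j ∈ Finset.univ \ t, B istar j = 0 := by
      intro j hjm
      simp only [ht, Finset.mem_sdiff, Finset.mem_filter, Finset.mem_univ, true_and,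
        not_lt] at hjm
      exact le_antisymm hjm (hB0 istar j)
    have hsum : ∀ g : Fin m → ℝ, ∑ j ∈ t, B istar j * g j = ∑ j, B istar j * g j := by
      intro g
      refine Finset.sum_subset (Finset.subset_univ t) ?_
      intro j _ hjt
      have : B istar j = 0 := hzero j (by simp [Finset.mem_sdiff, hjt])
      simp [this]
    have hw1 : ∑ j ∈ t, B istar j = 1 := by
      have := hsum (fun _ => 1)
      simpa [hBrow istar] using this
    have hkey : f (∑ j ∈ t, B istar j • p j) < ∑ j ∈ t, B istar j • f (p j) := by
      refine hcvx.map_sum_lt (fun j hjm => ?_) hw1 (fun j _ => hp0 j) ?_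
      · simpa [ht, Finset.mem_filter] using hjm
      · exact ⟨j₁, by simp [ht, Finset.mem_filter, h1], j₂,
          by simp [ht, Finset.mem_filter, h2], hpj⟩
    calc f (q istar) = f (∑ j ∈ t, B istar j • p j) := by
          rw [hq istar]; simp only [smul_eq_mul]; rw [hsum p]
      _ < ∑ j ∈ t, B istar j • f (p j) := hkey
      _ = ∑ j, B istar j * f (p j) := by simp only [smul_eq_mul]; exact hsum _
  -- sum over rows
  have hsumlt : ∑ i, f (q i) < ∑ i, ∑ j, B i j * f (p j) :=
    Finset.sum_lt_sum (fun i _ => hle i) ⟨istar, Finset.mem_univ _, hlt⟩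
  have hswap : ∑ i, ∑ j, B i j * f (p j) = ∑ j, f (p j) := by
    rw [Finset.sum_comm]
    refine Finset.sum_congr rfl fun j _ => ?_
    rw [← Finset.sum_mul, hBcol j, one_mul]
  have : ∑ i, f (q i) < ∑ j, f (p j) := hswap ▸ hsumlt
  simpa [entropy, hf, neg_lt_neg_iff] using this
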